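/- For the points x_0 = 1/83, x_1 = 1/22, x_2 = 1/11, x_3 = 2/15, x_4 = 2/11, x_5 = 5/22, x_6 = 4/15, the unique even polynomial P of degree 26 satisfying P(x_j) = x_j and P'(x_j) = 1 for j = 0,...,6 has rational coefficients and satisfies P(x) ≥ |x| for all real x. -/
import Mathlib

open Polynomial

/-- The seven interpolation nodes. -/
noncomputable def certNodes : Fin 7 → ℝ :=
  ![1/83, 1/22, 1/11, 2/15, 2/11, 5/22, 4/15]

/-- The interpolation conditions for the certificate polynomial: even of degree
at most 26, `P(x_j) = x_j` and `P'(x_j) = 1` for the seven nodes. -/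
def certConds (P : Polynomial ℝ) : Prop :=
  P.natDegree ≤ 26 ∧ (∀ i, Odd i → P.coeff i = 0) ∧
    ∀ j : Fin 7, P.eval (certNodes j) = certNodes j ∧
      P.derivative.eval (certNodes j) = 1

def certC : ℕ → ℚ := fun n =>
  if n = 0 then ((273336906365397426078864562906838565074223151518907516027760030288 : ℚ) / 50943620940674447995025845049145113414460531981461799361349568433785) else if n = 2 then ((172837051889011535335292359292442626554610051119055059052477233305696451 : ℚ) / 3396241396044963199668389669943007560964035465430786624089971228919000) else if n = 4 then ((-6927588217235178769557406710109274630390932645803307163220690912724619069771 : ℚ) / 194070936916855039981050838282457574912230598024616378519426927366800000) else if n = 6 then ((1539701310973043540733663073336277968431072883663044622071160541866514737064773 : ℚ) / 95333091818805984552095148629979159606008013064723835062174630987200000) else if n = 8 then ((-88327475345398476059138077417627600090239600279861230859750496031195814132503809067 : ℚ) / 21735944934687764477877693887635248390169826978757034394175815865081600000) else if n = 10 then ((1506270190983537944333073056260955986674690372081669691029348049238330196984938510981 : ℚ) / 2484107992535744511757450730015456958876551654715089645048664670295040000) else if n = 12 then ((-246633441732207080900477381555665867092061311488114828666516763515718318471689150031929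 : ℚ) / 4347188986937552895575538777527049678033965395751406878835163173016320000) else if n = 14 then ((150101682160042945470190901995986897880722034759499877158323382538946014306167743194748781 : ℚ) / 43471889869375528955755387775270496780339653957514068788351631730163200000) else if n = 16 then ((-216421540830090047619172672364557230894581364702757249314559035543600303694958394153607999 : ℚ) / 1552567495334840319848406706259660599297844784196931028155415418934400000) else if n = 18 then ((51427518763299991065677929719998571602636382815033358270014562353465825544222109371642617999 : ℚ) / 13727965221908061775501701402716998983265153881320232248953146862156800000) else if n = 20 then ((-956417972117281671478581649589053868970984424939599287708100675016783608647450833493258197 : ℚ) / 14490629956458509651918462591756832260113217985838022929450543910054400) else if n = 22 then ((5596009572109106658454688082500249146975210969609085016785660326167107079744423954987539 : ℚ) / 7666999976962174419004477561776101724927628563935461867434150216960) else if n = 24 then ((-2049601492698075453523500707185442228654433119966392837533678044726020212011075186145325 : ℚ) / 447241665322793507775261191103605933954111666229568608933658762656) else if n = 26 then ((618003329365426042046464616484669501570327832872989878011229369057953701120253938097625 : ℚ) / 49693518369199278641695687900400659328234629581063178770406529184) else 0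

noncomputable def certP : Polynomial ℝ := ∑ i ∈ Finset.range 27, monomial i ((certC i : ℝ))

lemma certC_high {n : ℕ} (h : 27 ≤ n) : certC n = 0 := by
  unfold certC; repeat rw [if_neg (by omega)]

lemma certC_odd {n : ℕ} (h : n % 2 = 1) : certC n = 0 := by
  unfold certC; repeat rw [if_neg (by omega)]

lemma certP_coeff (n : ℕ) : certP.coeff n = (certC n : ℝ) := by
  simp only [certP, finset_sum_coeff, coeff_monomial]
  rw [Finset.sum_ite_eq' (Finset.range 27) n (fun i => ((certC i : ℝ)))]
  by_cases h : n ∈ Finset.range 27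
  · rw [if_pos h]
  · rw [if_neg h, certC_high (by simp only [Finset.mem_range, not_lt] at h; exact h), Rat.cast_zero]

lemma certP_eval (y : ℝ) : certP.eval y =
    ((273336906365397426078864562906838565074223151518907516027760030288 : ℝ) / 50943620940674447995025845049145113414460531981461799361349568433785) + ((172837051889011535335292359292442626554610051119055059052477233305696451 : ℝ) / 3396241396044963199668389669943007560964035465430786624089971228919000) * y ^ 2 + ((-6927588217235178769557406710109274630390932645803307163220690912724619069771 : ℝ) / 194070936916855039981050838282457574912230598024616378519426927366800000) * y ^ 4 + ((1539701310973043540733663073336277968431072883663044622071160541866514737064773 : ℝ) / 95333091818805984552095148629979159606008013064723835062174630987200000) * y ^ 6 + ((-88327475345398476059138077417627600090239600279861230859750496031195814132503809067 : ℝ) / 21735944934687764477877693887635248390169826978757034394175815865081600000) * y ^ 8 + ((1506270190983537944333073056260955986674690372081669691029348049238330196984938510981 : ℝ) / 2484107992535744511757450730015456958876551654715089645048664670295040000) * y ^ 10 + ((-246633441732207080900477381555665867092061311488114828666516763515718318471689150031929 : ℝ) / 4347188986937552895575538777527049678033965395751406878835163173016320000) * y ^ 12 + ((150101682160042945470190901995986897880722034759499877158323382538946014306167743194748781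 : ℝ) / 43471889869375528955755387775270496780339653957514068788351631730163200000) * y ^ 14 + ((-216421540830090047619172672364557230894581364702757249314559035543600303694958394153607999 : ℝ) / 1552567495334840319848406706259660599297844784196931028155415418934400000) * y ^ 16 + ((51427518763299991065677929719998571602636382815033358270014562353465825544222109371642617999 : ℝ) / 13727965221908061775501701402716998983265153881320232248953146862156800000) * y ^ 18 + ((-956417972117281671478581649589053868970984424939599287708100675016783608647450833493258197 : ℝ) / 14490629956458509651918462591756832260113217985838022929450543910054400) * y ^ 20 + ((5596009572109106658454688082500249146975210969609085016785660326167107079744423954987539 : ℝ) / 7666999976962174419004477561776101724927628563935461867434150216960) * y ^ 22 + ((-2049601492698075453523500707185442228654433119966392837533678044726020212011075186145325 : ℝ) / 447241665322793507775261191103605933954111666229568608933658762656) * y ^ 24 + ((618003329365426042046464616484669501570327832872989878011229369057953701120253938097625 : ℝ) / 49693518369199278641695687900400659328234629581063178770406529184) * y ^ 26 := by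
  simp only [certP, eval_finset_sum, eval_monomial, Finset.sum_range_succ, Finset.sum_range_zero]
  norm_num [certC]

lemma certP_deriv_eval (y : ℝ) : certP.derivative.eval y =
    ((172837051889011535335292359292442626554610051119055059052477233305696451 : ℝ) / 1698120698022481599834194834971503780482017732715393312044985614459500) * y ^ 1 + ((-6927588217235178769557406710109274630390932645803307163220690912724619069771 : ℝ) / 48517734229213759995262709570614393728057649506154094629856731841700000) * y ^ 3 + ((1539701310973043540733663073336277968431072883663044622071160541866514737064773 : ℝ) / 15888848636467664092015858104996526601001335510787305843695771831200000) * y ^ 5 + ((-88327475345398476059138077417627600090239600279861230859750496031195814132503809067 : ℝ) / 2716993116835970559734711735954406048771228372344629299271976983135200000) * y ^ 7 + ((1506270190983537944333073056260955986674690372081669691029348049238330196984938510981 : ℝ) / 248410799253574451175745073001545695887655165471508964504866467029504000) * y ^ 9 + ((-246633441732207080900477381555665867092061311488114828666516763515718318471689150031929 : ℝ) / 362265748911462741297961564793920806502830449645950573236263597751360000) * y ^ 11 + ((150101682160042945470190901995986897880722034759499877158323382538946014306167743194748781 : ℝ) / 3105134990669680639696813412519321198595689568393862056310830837868800000) * y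 ^ 13 + ((-216421540830090047619172672364557230894581364702757249314559035543600303694958394153607999 : ℝ) / 97035468458427519990525419141228787456115299012308189259713463683400000) * y ^ 15 + ((51427518763299991065677929719998571602636382815033358270014562353465825544222109371642617999 : ℝ) / 762664734550447876416761189039833276848064104517790680497397047897600000) * y ^ 17 + ((-956417972117281671478581649589053868970984424939599287708100675016783608647450833493258197 : ℝ) / 724531497822925482595923129587841613005660899291901146472527195502720) * y ^ 19 + ((61556105293200173243001568907502740616727320665699935184642263587838177877188663504862929 : ℝ) / 3833499988481087209502238780888050862463814281967730933717075108480) * y ^ 21 + ((-2049601492698075453523500707185442228654433119966392837533678044726020212011075186145325 : ℝ) / 18635069388449729490635882962650247248087986092898692038902448444) * y ^ 23 + ((618003329365426042046464616484669501570327832872989878011229369057953701120253938097625 : ℝ) / 1911289168046126101603680303861563820316716522348583798861789584) * y ^ 25 := by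
  simp only [certP, derivative_sum, derivative_monomial, eval_finset_sum, eval_monomial,
    Finset.sum_range_succ, Finset.sum_range_zero]
  norm_num [certC]

lemma certP_sos (y : ℝ) : 0 ≤ certP.eval y - y := by
  rw [certP_eval]
  have h : (((273336906365397426078864562906838565074223151518907516027760030288 : ℝ) / 50943620940674447995025845049145113414460531981461799361349568433785) + ((172837051889011535335292359292442626554610051119055059052477233305696451 : ℝ) / 3396241396044963199668389669943007560964035465430786624089971228919000) * y ^ 2 + ((-6927588217235178769557406710109274630390932645803307163220690912724619069771 : ℝ) / 194070936916855039981050838282457574912230598024616378519426927366800000) * y ^ 4 + ((1539701310973043540733663073336277968431072883663044622071160541866514737064773 : ℝ) / 95333091818805984552095148629979159606008013064723835062174630987200000) * y ^ 6 + ((-88327475345398476059138077417627600090239600279861230859750496031195814132503809067 : ℝ) / 21735944934687764477877693887635248390169826978757034394175815865081600000) * y ^ 8 + ((1506270190983537944333073056260955986674690372081669691029348049238330196984938510981 : ℝ) / 2484107992535744511757450730015456958876551654715089645048664670295040000) * y ^ 10 + ((-246633441732207080900477381555665867092061311488114828666516763515718318471689150031929 : ℝ) / 4347188986937552895575538777527049678033965395751406878835163173016320000)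 * y ^ 12 + ((150101682160042945470190901995986897880722034759499877158323382538946014306167743194748781 : ℝ) / 43471889869375528955755387775270496780339653957514068788351631730163200000) * y ^ 14 + ((-216421540830090047619172672364557230894581364702757249314559035543600303694958394153607999 : ℝ) / 1552567495334840319848406706259660599297844784196931028155415418934400000) * y ^ 16 + ((51427518763299991065677929719998571602636382815033358270014562353465825544222109371642617999 : ℝ) / 13727965221908061775501701402716998983265153881320232248953146862156800000) * y ^ 18 + ((-956417972117281671478581649589053868970984424939599287708100675016783608647450833493258197 : ℝ) / 14490629956458509651918462591756832260113217985838022929450543910054400) * y ^ 20 + ((5596009572109106658454688082500249146975210969609085016785660326167107079744423954987539 : ℝ) / 7666999976962174419004477561776101724927628563935461867434150216960) * y ^ 22 + ((-2049601492698075453523500707185442228654433119966392837533678044726020212011075186145325 : ℝ) / 447241665322793507775261191103605933954111666229568608933658762656) * y ^ 24 + ((618003329365426042046464616484669501570327832872989878011229369057953701120253938097625 : ℝ) / 49693518369199278641695687900400659328234629581063178770406529184) * y ^ 26) - y =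
      ((126138006320543867694139004300410577484490926104085581462287878889127079893185 : ℝ) / 125786718372035674061792209997889168924593906127066171262591526997) * (((-4 : ℝ) / 54684135) + ((1132080465348321066556129889981002520321345155143595541363323742973 : ℝ) / 166079914312975024181657226719039472396945598197615485099741036043034232) * y ^ 1 + ((-8989701820623983580220184459851567059492648919633334832187381732828779962298537389111723274563435025779 : ℝ) / 431109235391467133400527251245577035911866388084427499264827986127292204314669632498437500000000000000000000) * y ^ 2 + ((-32101239267952573723211468281791234981418885692447863317564723936911919793894248230743151621171969054191563 : ℝ) / 8622184707829342668010545024911540718237327761688549985296559722545844086293392649968750000000000000000000000) * y ^ 3 + ((180401917655902051949333507930163181629310536326822226462889334270063133691662562278041980537906528888135271 : ℝ) / 8622184707829342668010545024911540718237327761688549985296559722545844086293392649968750000000000000000000000) * y ^ 4 + ((783906176792816583081511067974820441032655574633749206619946040407745999568363873682281666639187242865204083 : ℝ) / 1567669946878062303274644549983916494224968683943372724599374495008335288416980481812500000000000000000000000) * y ^ 5 + ((-10567026131642170682042406549880142386101655101419632359998268444306176073002100145531104221155881743910930587 : ℝ) / 4311092353914671334005272512455770359118663880844274992648279861272922043146696324984375000000000000000000000)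 * y ^ 6 + ((-1268084324886187717293328998261619796791879487939135700256309664844718419234005036989996818719811087423510501961 : ℝ) / 45984985108423160896056240132861550497265748062338933254914985186911168460231427466500000000000000000000000000) * y ^ 7 + ((7013566268585438238461800852094541917979975819506195752673723202524677209597524617496462329966825313203711261253 : ℝ) / 68977477662634741344084360199292325745898622093508399882372477780366752690347141199750000000000000000000000000) * y ^ 8 + ((49898463542870074169870206862764758025750316960933806839447476714961826381836020368185209487875753431572492152147 : ℝ) / 68977477662634741344084360199292325745898622093508399882372477780366752690347141199750000000000000000000000000) * y ^ 9 + ((-10799552871361191031525255507566091439888208107249568440136372755332353669324865838351678616068260506578140502747 : ℝ) / 6270679787512249213098578199935665976899874735773490898397497980033341153667921927250000000000000000000000000) * y ^ 10 + ((-10225497780515503637001222961532655000034462857455491259773860856219713434237843888686538951370795909995664775331 : ℝ) / 1140123597729499856927014218170121086709068133776998345163181450915152937030531259500000000000000000000000000) * y ^ 11 + ((5829771355445967280217096350424285984249189508131856969952847807229589735934710767786624772892347564215224691 : ℝ) / 575819998853282756023744554631374286216701077665150679375344167128865119712389525000000000000000000000000) * y ^ 12 + ((5320980516783546424043811740179514990936442984463550956556590217821621182403094657920094023178751360041299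 : ℝ) / 126138006320543867694139004300410577484490926104085581462287878889127079893185000000000000000000000000) * y ^ 13) ^ 2 + ((4428612392725818823400739205026368554574110698497600679802150873574119921502639375710121743332953741187075320327639852021922251180805496216683680726687922145927939 : ℝ) / 19149537756240047763756725724259087452987024128603085996948235428396009897457523115331509842781105960997343423893398358305015375000000000000000000000) * (((-4 : ℝ) / 54684135) * y ^ 1 + ((161337454338537686814152158493790342533037197965600894556794263958218638388152707861242758550330255462049477033396389756024801095116042172915067150820545580783182343793269 : ℝ) / 20904532011541163071345101531893082504746743548797797846213888512168465575266981880110576937830728410083486796052010331951617445694240660783973928115068269764776700220403074800) * y ^ 2 + ((-50179501915835028172056250913796305963484372497825247306892298021073075331567178290788853778414470033893875794109962928110359384793731946110531242256514570262966450811764563 : ℝ) / 418090640230823261426902030637861650094934870975955956924277770243369311505339637602211538756614568201669735921040206639032348913884813215679478562301365395295534004408061496000) * y ^ 3 + ((-742120195836640265353881705762518105168068653351200231080192247854857773980833791486787740410832072076021959569179787364946881020176017286305573587771071969748139141168580769 : ℝ) / 418090640230823261426902030637861650094934870975955956924277770243369311505339637602211538756614568201669735921040206639032348913884813215679478562301365395295534004408061496000)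 * y ^ 4 + ((26324981338631232794439841752224111134159388422153517272569937872181961177151490152482713719126779338703869076638113398151167738491940248843964415351919383128282401351686357193 : ℝ) / 836181280461646522853804061275723300189869741951911913848555540486738623010679275204423077513229136403339471842080413278064697827769626431358957124602730790591068008816122992000) * y ^ 5 + ((115449182081313724786471507617561184932249280981601150532852556334989344057157108847666539897106634086761270526362987508395095376435573512909033799906623093762841493015929741063 : ℝ) / 905863053833450399758287733048700241872358887114571240002601835527300174928235881471458333972664897770284427828920447717903422646750428633972203551652958356473657009550799908000) * y ^ 6 + ((-16741015939485628071099782369651606907788347776310443774148889695792075517780607615694189263343738825923733621107366350745112850421523494204345135357662938583185353997149809025763 : ℝ) / 6689450243693172182830432490205786401518957935615295310788444323893908984085434201635384620105833091226715774736643306224517582622157011450871656996821846324728544070528983936000) * y ^ 7 + ((-170298202159159043370051763028032906604842994888866897074457019664354033388205183181000916112689718756562381455965740928595680367607695709778462444339002704583072647208963435430951 : ℝ) / 43481426584005619188397811186337611609873226581499419520124888105310408396555322310630000030687915092973652535788181490459364287044020574430665770479342001110735536458438395584000) * y ^ 8 + ((3666779553700355035855063784325711327233941515188079601686586775003265883727906752839148574991685472264003461631899241774312398708633776572303563650850669016038377148627550062923551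 : ℝ) / 43481426584005619188397811186337611609873226581499419520124888105310408396555322310630000030687915092973652535788181490459364287044020574430665770479342001110735536458438395584000) * y ^ 9 + ((213121920163633647633131547326191078166132836905206168258560830370573668413591393559547523108254701826550362110464285065433092426066684821544250323427459609366940668620183691179129 : ℝ) / 3952856962182329017127073744212510146352111507409038138193171645937309854232302028239090911880719553906695685071652862769033117004001870402787797316303818282794139678039854144000) * y ^ 10 + ((-902996339923562809191071266763341094362531528887525035554809751702467516172758791229081274025736864101173641983709110759523556509212163574254193018324120423913263409834743998311663 : ℝ) / 718701265851332548568558862584092753882202092256188752398758481079510882587691277861652893069221737073944670013027793230733294000727612800506872239327966960508025396007246208000) * y ^ 11 + ((-99046147100864854279127446594668424605568252646265321131572321506814714394426978812601838966830508696487668824486971998222517516554663286971521755446058607925342460784080249857 : ℝ) / 362980437298652802307352960901056946405152571846559975958968929838136809387722867606895400540010978320174075764155451126632976768044248889144884969357559070963649189902649600) * y ^ 12 + ((539635297121816747050129766332952117620830420839009843843882622412158121856666020217919557388219613150804268558698165789004313227671392994215900831353348812837616308426552927 : ℝ) / 79513786921939277613877976100998235795214144982817081261548505988638950577814428829549923447976117923367815063341829381518724374160843130152220146628161899444391936451840)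 * y ^ 13) ^ 2 + ((13074697745490639665196001336855770899520619434829365393865536541817048922561287916385008571201499128211410496751410423232899028590697123563619256465022104123847920215365144417817737537407955043317467718276406993130337298079161216148287 : ℝ) / 28666861994988813180663295001666137500625420226517924858460462456726087356075964267493765151525632858467264259140302469482796690380183883523149053973420050876610870285863559911492812500000000000000000000000000000000000000000000) * (((-4 : ℝ) / 54684135) * y ^ 2 + ((31570838361917418791733649248719319131825589638142648653132073893649865257246567572240150270970469619241688694975564205600314744992526347075874969995461398273009443766499597214502714515242482640247343463482286339753161097860638320150993161 : ℝ) / 3574892682993028903439664692824007256992284942289163595812355860500783242914730070967332603418699452647475400723855945122374934604112706245323182545664457599462781942631283158192207824450920818313516262821845036636417187018480463153085531633725) * y ^ 3 + ((-903568382295033686351616292922395085453006067519340184395961856378087320412115850920852642525586783231823101077337522769326262482731024406980704755878369153020074071641156545270710112797860103781689615007549641046159387405642483977977712637 : ℝ) / 3574892682993028903439664692824007256992284942289163595812355860500783242914730070967332603418699452647475400723855945122374934604112706245323182545664457599462781942631283158192207824450920818313516262821845036636417187018480463153085531633725) * y ^ 4 + ((402237210548367856515839031956760662455610699563735941876813270750046996105626014474741649780214766496931681867682250499243523197163416519463680380737525633005634247425384352356586488014469765812709521532735915500855145013031195031735610133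 : ℝ) / 216660162605638115359979678352970136787411208623585672473476112757623226843316973998020157782951481978634872771142784552871208157825012499716556517919058036331077693492805039890436837845510352625061591686172426462813162849604876554732456462650) * y ^ 5 + ((120829889147868198715480065286516247567503990693035932186186254534523186731527448809824646778066147105693869466748226650759607980348319770156839098171955331360843085894163796064903573226810773287161768880425740476220072415482580959175739002075225311557749908077721024653586690626851375871330878902985795094 : ℝ) / 11530103054510131580992171731048442891408577154954941606522486360272788817657639947916986792840345484487500211192044798916238723694042857312483217043879553336023057533945335734805836805489179743537351082352515538456698925812008217886435803116917130229690824661515115564932440143580382000700854892881944953175) * y ^ 6 + ((-1710962169270002728037091547141412835983115489856915123763463497297413498658558527442314878662001356041823180462985858514936262590914201024298125623422100945710341477603133553898500976320604162784347052891226987560024365285475181349645624954612262450619199897910051060636808641673861330042622037278615718729 : ℝ) / 14190896067089392715067288284367314327887479575329158900335367828028047775578633782051676052726579057830769490697901290973832275315745055153825497900159450259720686195625028596684106837525144299738278255203096047331321754845548575860228680759282621821157938044941680695301464792098931693170282945085470711600) * y ^ 7 + ((-59451479318879498839222238456781638717999801225161302800902281482384789195470162836601051827596295085142501959793256625792338050875519978156565687272297107240800797394158183314406021468922676265138541126719344883017413241468868387161104018297157294732842069879940469408461104906592238784689570606499445217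 : ℝ) / 146646779707601037596084855084876857124433413735515950480413181052754070812815770402759768430401850359141497121679425105452956740146808996025223746186067451014601685646363570553969307541992747135610188646772852635379318611281503566123189864762062069694000949590017368075452338869066861694128520100247312600) * y ^ 8 + ((407639323452158427712260701809300860479150813830254466999305882465905187787672409966334402517088381409054109978618208053013706624203397647715928612460568510209253472289298993757481609040299032486060190391057859215722414563011126998734032169441066466747037202899597065698485712478604328061975631067118010556093 : ℝ) / 92240824436081052647937373848387543131268617239639532852179890882182310541261119583335894342722763875900001689536358391329909789552342858499865736351036426688184460271562685878446694443913437948298808658820124307653591406496065743091486424935337041837526597292120924519459521148643056005606839143055559625400) * y ^ 9 + ((50790237309609492729586399982540488374803722956730596338505474434871856777000860245676487987419853362589710038623217162823842655186458375804639129654748855551190389790325815293932837194023072158254578577892723961906191033078322199718513629856700793822896447609324959293190403810171691674953822309303281842507 : ℝ) / 8385529494189186604357943077126140284660783385421775713834535534743846412841919962121444940247523988718181971776032581029991799050212987136351430577366947880744041842869335079858790403992130722572618968983647664332144673317824158462862402266848821985229690662920084047223592831694823273236985376641414511400) * y ^ 10 + ((-5498252696096053165168488425967716076463030134651623706516314847310179288949017064611204607848893201695441137236084754122463394450406253047288324093705891338641615701066001512892339602758822230503558354638536841811484580993456381466575824513995776675742985000342039652827958163399847617022955277336155970431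 : ℝ) / 80244301379800828749836775857666414207280223783940437452962062533433936964994449398291339141124631470987387289722799818468821043542708010874176369161406199815732457826500814161328137837245270072465253291709547027101862902562910607300118681979414564451958762324594105715058304609519839935282156714271909200) * y ^ 11 + ((-178779592261830164044220411639016419670825467851496310762315496416279044904683849305796986638942182445513208225806066830057721659331770345421764318632472221876674267259641075857975319656592715175116552206694008671178634567556025731417506043940191599291078994583085252403917387100045514614792365910131631 : ℝ) / 5461142367706195810039754786502120029867197692867928618118343678398326536051631702011374180390314485094778846997396649297613008909346845069880904842992756631918177157043898091071117626290064228729994313856584975696451734181156606987256447301414416235357892700649358867347617263345787516191564501651860) * y ^ 12 + ((63992136543069223453750298555874970014350428108200320772329502156033978075885131189731885206319196671049697419801670997446583790968058342861081876877638196056734306571559768063465403816991704880856248037706358234036246982729395934157244095044453788156777808437069261804288404591064400259310573501614781 : ℝ) / 168679315190925215600351681247929665763696577151013786452286190285687632329305601310756573808331728893398426599481473724197904546816627635236190051010291059167680827851739240052799032925936266429557327109261441746593580398585560040570242950602285364553222972791141204884121365636748311014898268287604) * y ^ 13) ^ 2 + ((31359427606691095626652197646530623356815858807942267647585246494536188615528046902482772854567890583647391652479222631952873197347200533395417471198709061578399236973924079481662125033463152568603543675343567247162019709367263384286539757129291726321342911293501631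 : ℝ) / 1634337218186329958149500167106971362440077429353670674233192067727131115320160989548126071400187391026426312093926302904112378573837140445452407058127763015480990026920643052227217192175994380414683464784550874141292162259895152018535875000000000000000000000) * (((-4 : ℝ) / 54684135) * y ^ 3 + ((160854658434965793362074368701387859757005621428670210415697005786592603396927640048829538237593045632203479050518261082769520997941836823754917033124017122741618358384388995856877156089617937099459543356948137506028786069923387102277939101027462381578763356094370457401 : ℝ) / 17148631727670227765457583741495628892782715931944540362466840433154937006369988131016997859535258953414027575220468951007662315616159558402670173763888181490764969585790558421259416697167785525871129438208838027253862526597001954868820187617254012165393691424668678123241850) * y ^ 4 + ((-669915753834214277183385568570654884910912609054295351748525513227527656779548036229340243537905204780393210033804897755844934072203985327771500326311759015201748917420357282563561967506487674415931245606130485666028069145345956574186240379493008874214684207886149457709 : ℝ) / 2078622027596391244297888938363106532458511022053883680299010961594537818953937955274787619337607145868366978814602297091837856438322370715475172577440991695850299343732188899546595963293064912226803568267737942697437882011757812711372143953606546929138629263596203408877800) * y ^ 5 + ((27220688834515650550960346391305869212857091781688806708359888228935308164410514275143406328491822285491986244735066874817250603864798294165342757526498473868972565971148167005187402916907593452797111482069760250327969018138665607634853229065028033935874797601194938302861647071640447513298856797997258131450817522748186914266923419054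 : ℝ) / 6536576089679425760517008231518440350083043453453118016141706136973066698050507863372233079046877467692024573866080652406573935520201321504108517762453919104143921244176222903737357659719986223416666392407313732011340992188209083248518814414830625219961315377108401594973996081841329011242042343576170110695331205431153241320956204349165) * y ^ 6 + ((-14784976836157744564280856448315660622877841957970270612451091410941120643767121592891739024366947960972964561306613870647376325798739994987986678282666353977808612867983566584151332529080591692156124753388027897066833527362206564807781931268269679039182537146308134536944182030640128919129890249712494739167481891192393422368040852902503 : ℝ) / 884951839833522256808456499036342693549704344467499054493030984697892106812991833810394632240192641779843326923407842171966932808888794295940845481686069047945638568442319408505980729315936596401025603895144012949227703557788306655184085643853992337471685774131598985165710238772364543060461117284158414986444840119909977286529455358040800) * y ^ 7 + ((-514603864713915266052009354014159660028441318326807176570415011291750542328271919599760808298958228643810378459000642785115371985120961258147660813554799309516737750748733814131300383702320535847052370648617179586162214223871837658439815079237829901427502166996163823550686732888569848544432511248523702708615379868222954391955677289731 : ℝ) / 9144971317834490730135083058404177278335577486548082439117172337895546413806751859725858679747618714736059817173530960441629671316020926746606511336978455980360334968004890548948926455570092013683094475863968337313163868244235283400153508243324245140804383993410800323652013596216803704122412181791780123071369571986351116633452241378800)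 * y ^ 8 + ((52436499087062401468303255220285735271320445725082530163133403573472120082572655129873230176064663393725293386057866963509411594433938622001820649583869070534480925401184252258873789042358729611187755681502739222672275655731394776744862969600406064240462922808366956619954789612426730081384592510637128589439775749488210613684051954532287 : ℝ) / 130731521793588515210340164630368807001660869069062360322834122739461333961010157267444661580937549353840491477321613048131478710404026430082170355249078382082878424883524458074747153194399724468333327848146274640226819843764181664970376288296612504399226307542168031899479921636826580224840846871523402213906624108623064826419124086983300) * y ^ 9 + ((47230453121409264394757536440202841960843902640972054891397484373255943347238232043505710698914290570914071154522321290486165713135642525432742507558729192184841675879722562051846245801939281125388204114727365726128130515049726658712571811507436328675724961536899233427105670472029438317825167983203145560024805360548674877328613264461573 : ℝ) / 47538735197668550985578241683770475273331225116022676481030590087076848713094602642707149665795472492305633264480586562956901349237827792757152856454210320757410336321281621118089873888872627079393937399325918050991570852277884241807409559380586365236082293651697466145265426049755120081760307953281237168693317857681114482334226940721200) * y ^ 10 + ((-3002143918040428695740259494082828161282317153377816554843738528176302936402106923957686069868350356519505539055461638110096514322150364542586139421294505924250343033466336297889201134978739282173303931211299438759111350321065953029426339258231668542477406374444950846374960740919543200467547392702566509644609762940877410243602138090333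 : ℝ) / 454916126293478956799791786447564356682595455655719392162972153943319126441096676006766982447803564519671131717517574765137811954428974093369883793820194457008711352356761924575022716639929445735827152146659502880302113418927121931171383343354893447235237259824856135361391636839761914657993377543361121231515003422785784519944755413600) * y ^ 11 + ((-170359363683078519646581882542155451152080202972207744318016379336167528078398453551832508509232686479979639055508799779771275769377827731709604931025797424484627561681902656417635450775489749291673253004887695581230455484147136640410740435093758475929070091517268373657315182369171712109021264624061595819958695381122922719206646693 : ℝ) / 30959977074203381972906526049515448015507248576039359735999967493814253894909509435233801370113431212385383991091173868248507869955406933784754610224886075948010300504257026172811202866103085711658126981827246058907300504905850407236393307270373864522779238973681017880458632781558408118424937937258619182601852084794504999924601880) * y ^ 12 + ((397168595135260073417208215902533396690809524035761809586896703544719870196310729977462329746562570549698958629451325535176348451976265846535248069186704175927185226430325569718762861152091139131689187770389167130816108930046948261975731137621163622311630147309430500951998536635366653180213838747246102119365461657018666233532866933 : ℝ) / 10518931969789582790794747404775128120931378431859155958496374497898336865499375494862568658279503134810455765647844615477203878707740669069037108534238401707637234629157206482810553262941048398418785311897931793508263545040300981735738448976199313006534633000696442219625704149878880830597388552177024830715328057725361939733418952)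 * y ^ 13) ^ 2 + ((1505636202936394212325424420203256960639355126249170516315079513751141221295553355305308285232221509690521323751768807445115860160487849899895074690740625065493833952430364094194746080736492483861457760608286253150743997305530262495251085386410935901122134918720443032830375 : ℝ) / 1003501683414115060052870324688979947418107481854152564722727887825158035696897500879448731346172498676716532879335124222491942315110417068653359078358689970508775583165570543413188001070820882195313397610994151909184630699752428297169272228137335242282973161392052192) * (((-4 : ℝ) / 54684135) * y ^ 4 + ((1183090501354834173335526887425818935522024216911912484359063001608707433148498433369661175955042485268229485725558324324322297432781720316891298237118760720956301083472143390110872752565859369405187604011226442962005963684885827705494647981163790986036968901829462892576767 : ℝ) / 121976908714461003733366182113617231222655084498891383929175571356595204369468021601805102942603418349363372279141380674248475240973687777460146296627471986764220233366349049223849201436615191724393003670964751979169570517178152771667773647654848569323421447975589235654971346075) * y ^ 5 + ((-4366732063137909979837676646642654787319077379837364308968080143982387388295264102519318893663876180694210551527448895245826423059628064716575891745643624006481309331008814847938330313137165210574500700593227973934809539960818354560810298786687707232820574593760626321488206910609162871317910914706461924446278072692183977448633310900666757433029937980310911181623 : ℝ) / 11986777394029226759503183569608554847888853116641404812276072133412352019577893421305373834637127492710322963519736833614994562052303535043554176388623691821483377263256826206063549459657531349888302262287073801190680617130317581416438255472141430006480354613171519929135598763902915992660515002263611845607902819958341235891509394620931630292968750000000000000000000)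 * y ^ 6 + ((105303485052792203518929295790564489694591982301847086472371630380494194690432781429961983078691081601531899159789170539831856613377449483410073957943602475722377280938591895760225344164230743679337018385064598815268329481470852934825288209172817800171517733441319340739180686556833186345461414942367647281918206909307610078367707060379639509775566913845602259322453 : ℝ) / 18441195990814195014620282414782392073675158640986776634270880205249772337812143725085190514826349988785112251568825897869222403157390053913160271367113372033051349635779732624713153014857740538289695788133959694139508641738950125256058854572525276933046699404879261429439382713696793834862330772713248993242927415320524978294629837878356354296875000000000000000000000) * y ^ 7 + ((-7603493671595368530049701119347005238083240538035548394231095666499572734437692565325721784086446787482867883594071496541861379813230850343677339105893408806388380864950113268746320739180297460173144055119289518550185676100776460597471981122385227935590684324434878859447142468394517621629881787641137035384184654013000388150382100097906751383414480247671095164447 : ℝ) / 190568797997285004125646797609039027788376043189847453295327060944552496336691469337128359851146700996984466828612668260969706868876049841709923313014685084602279447746531418220406191727464727343216252182624384756608594866936686509005377670463297774347859373818307153086416514529458123889674324360311794047820394593932293098434171615595097460937500000000000000000000) * y ^ 8 + ((84787548570928354526923724415785257200001772380997120515686939557999525295816477320434167520766001490815267310577330212274910959533236716176872646953621188343069313524817108409671115312138814816012341908095574677162541639337512415401979252808154236790717191577910046124360029650587587226671423041265870980905961921294216709994471838990469147437129765049340505690337029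 : ℝ) / 958942191522338140760254685568684387831108249331312384982085770672988161566231473704429906770970199416825837081578946689199564964184282803484334111089895345718670181060546096485083956772602507991064180982965904095254449370425406513315060437771314400518428369053721594330847901112233279412841200181088947648632225596667298871320751569674530423437500000000000000000000000) * y ^ 9 + ((11275348375072016385407090077260423389341607500358394894512070923720683925535971520168128939623166247029851248289259839033708199464315586064469752339886242687711609855408740765119793497192311103369895279940763144327642925808317845327991809452644564554765423243464714231208989330255814298862107377626252241981821676506660215883430526146001157678408852254380207640326013 : ℝ) / 43588281432833551852738849344031108537777647696877835681003898666954007343919612441110450307771372700764810776435406667690889316553831036522015186867722515714485008230024822567503816216936477635957462771952995640693384062292063932423411838080514290932655834956987345196856722777828785427856418190049497620392373890757604494150943253167024110156250000000000000000000000) * y ^ 10 + ((-436294256279969522054241393517261130173965484817524902598550194206484824472999758307895111192172152908416745605349520988352492251449209302627218645149256349238867225460747097903272287661409220544651324233379228488565822952945757125856693419114206477682638962678655249247034011628268433795787137070405063047193643881609398149476555937438148653082639349591601066108953 : ℝ) / 417112740984053127777405256880680464476341126285912303167501422650277582238465190824023447921257155031242208386941690599912816426352450110258518534619354217363492901722725574808648959013746197473277155712468857805678316385569989783956094144311141540025414688583610958821595433280658233759391561627267919812367214265623009513406155532698795312500000000000000000000000)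 * y ^ 11 + ((-42289053949571818466445780563130758441501192337469542149828804162828299838685834511874398784574778087372609501364403471414539956039859711614179022399809481272866034036538825242453880637359979313426723374600366477506417272487476324909074018935904049150413482080414141340798093373190176312870877414454976555894199664124283778763119977516878861428077389638246630313 : ℝ) / 28387212832928610315103875208585603642991909876897821334560237231733197444411629148421969734593760103136334835417623473738604169713792363689776675111998460240369529094963055811176768469307177276281488496801018333361587546836556364693623428404297189127025141783396404533312963795159060252985312955505732776112103557012813169835650673835078125000000000000000000000) * y ^ 12 + ((5531183213294885995432322634912580800946790786566455635529826123941609460518890879788552603916971179298636076185255128552539574061442324069890953378722604631056218245645833113838938480759855556894126100854855221046790477531075593125241843353646540303492537790166640193824022151789915737100603716773053268791911874642412622246638279392671495529937980310911181623 : ℝ) / 876801097358802640619856824624440331579815836285343441001751029501507303321366858691675297388328625310454153733600199298388431090831264683517746153514081685409004075003240059008964809238184445992484091576986546550708399584655957814195159562980482730977118289476208770908461751394836253159020619217154068221644381498095653219458213583953125000000000000000000000) * y ^ 13) ^ 2 + ((506675430222375920030330896754697109186141805103104823431522688679590465175669804039373463613192405899172340153869329681261299763186956066868849246720509311561710950774859518210634851827553674762086503228957548299324545789359962222821564713269774684509785232296292678138841000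 : ℝ) / 4015029874497051232867798453875351895038280336664454710173545370003043256788142280814155427285924025841390196671383486520308960427967599733053532508641666841316890539814304251185989548630646623630554028288763341735317326148080699987336227697095829069659026449921181420881) * (((-4 : ℝ) / 54684135) * y ^ 5 + ((16643960093740628042858548185469791988404218139439822370958778382073008555128660178911148418435441289298730743310011385795543112164304096232638237632378439742919837973369493975661458056831202803007061705517124457875553154707713473199877016920104329727893146768806133631896643655772117679163492114622692286710289092865263301937685741036397905068002143066963257879 : ℝ) / 1680741774710373690348570137330705270092575483370236946806054828892517079264036668236043640913873080500686752898252157492744994966018405480704449513158286302413901590923103034592494234021435945690590415010081464014428976343133635835251233781799323223632025377125872257979953755939886965913108804051613408236035573159481747867820468983573893702929687500000000000000000) * y ^ 6 + ((-92085179127661252838962833315454694596809460285289677714116442574678540542477417495390382944568928066450176133681793503258270683612843227669191629620910313431768153302992742150479409999623050103274927184560453025047525435848441522762173822640631375953234882423537252228271820866167197034449649215317670093332911344155456864766513736750055638548722926102658855679 : ℝ) / 235068779679772544104695124102196541271688878793040132420427248796156234862103030522523586141800430839256888517238063984999299995247329437860762169672487594743203019709524899943006186576424607788893764337074330631388668020018690326608564165286618632675807745052569546570622902928655519708127105461764113040004975267060384317177687969730614503906250000000000000000000)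 * y ^ 7 + ((181324120740974696766432493675199178752410113955734918307929550384500034473271245086473926228091552364684007822799185361574060737240329276671743629399790619620514961795051895270453689062124337787450081438892497995918363005366156819640073858829996212041373308986357942108813951627457002969654857959902808993716534566712922147389579389167984554958440732959729951231 : ℝ) / 26720854923853317811582991054542214150915349497142081825215498074602815250620614757329787613893053744049073972945185333747933147313488163445221772864201690022478562653785421853616760477288329820200165580446446168750858129461584035536585592715410544095898654644290496947217070841651621079699663021488289479110263484252492016976478044253956974609375000000000000000000) * y ^ 8 + ((-7826146668580516011620731341494943316779775641776927699241806508025387511292292295511615326994676711401851231899868474655264963704904884215413794674412527401879103796426682614173712207805496500889949522619598804907064599782668683223586647656210593398104348875904386902225052284841198821287304529159113862200556394301608914177735319846641333502434054487020044047249317 : ℝ) / 134459341976829895227885610986456421607406038669618955744484386311401366341122933458883491273109846440054940231860172599419599597281472438456355961052662904193112127273848242767399538721714875655247233200806517121154318107450690866820098702543945857890562030170069780638396300475190957273048704324129072658882845852758539829425637518685911496234375000000000000000000000) * y ^ 9 + ((1466116479530227325640219143034037375110045259823571477241044950980179534152304501829647150239876443190684885246591867310687156808375553655592353771097746969314250300623087726453600851654019020360014522545937465521137161491967713587886528545872685118543549946279698504301293369359856782887199387192277109422769529758680155234739160737233477113465246107859038966759651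 : ℝ) / 6111788271674086146722073226657110073063910848619043442931108468700062106414678793585613239686811201820679101448189663609981799876430565384379816411484677463323278512447647398518160850987039802511237872763932596416105368520485948491822668297452084449571001371366808210836195476145043512411304742005866939040129356943569992246619887212995977101562500000000000000000000) * y ^ 10 + ((-18090818558058872515443783564944806037914637697546753886109569780102513691433716041602241840835766086406411930448237022885556305035777507628712293701272561943433091344830545485435251414769541176099246045006654362432345567861358338080354014234088016994084072145425830685674076573254169959306494395724457819742361843291809367217355309501289544686088012997959252473031 : ℝ) / 58486012169130010973416968676144594000611587068124817635704387260287675659470610464934097987433600017422766521035307785741452630396464740520381018291719401562902186721987056445149864602746792368528592083865383697761773861440056923366724098540211334445655515515471848907523401685598502511112964038333654919044300066445645858819329064239195953125000000000000000000000) * y ^ 11 + ((-2762476981024799954766131732200956747954256340961470078894855030958752313140501734805233169450016221023074673417203428468228375462084759969958036391142729653921870296008289418478845830681479673378693188472099207701438215345174165587740551759238297308409675047272928625125162677001390992592212043735646134311988703545828484547736755667241200704433564924139005751 : ℝ) / 3980350423431012996973000948659457289245720160091595153945065398472189403001438494282354974429537933702387577547355999459444086172121319829096781100159999389981881036312608612571987346701730263636518552881446701975333846863532780084417787349609625884617289185450122248165859416958132916796139826378463512650769042418752315056835203884750781250000000000000000000)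 * y ^ 12 + ((217510561434058482314165570350335936683870209711389201059352271917127152133610975131857682060630779184692330676276110578312014891426002574163058628751700936900121010720028968743575263786555159258555217463017609989573292329313127279747043197059610425581514975249130673331968454643855609980269415164971278934282507934341316116276514824257805869497856933036742121 : ℝ) / 122941820307507739884598714953117957893460359818820354152520092263872662830931616143222793295633044611618104804858093302033212738284579648609561037266716300983011002435942566127634220347194735415717221458112592547321374021414703612684098141576113307717642448006235977435133883415355255480450321033814535659092756841411626817746717140799531250000000000000000000) * y ^ 13) ^ 2 + ((149755138649913378685766232399107060741147427549007590525660897042019287627174117148703834767046029738693989793916810556416265646710005857526608701552483822088618847623191425956520761753216336056805057000860176425180877620967863619724784585781404386503617419886620008196365789915712827435767108425205377858186748503804297383345120205861269474609861530987994099521708911949802568245757376191322389181716113628767774878395721664657071097636754128556235453409 : ℝ) / 18557337752599070817802496576541444422640132525735838334188930751649966932339506430636768309838691468261684980750888160548473221849832017033665930433221290862733802087458851168938001035314551316363663743875568662176016190215461459869595739087912870640060609110179937058651266340466493920129219958390295168003134744079457192999481376828383101488412810697810272546207398002614088892063704782471812479184187500000000000000000000000000000000000000000000000) * (((-4 : ℝ)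 / 54684135) * y ^ 6 + ((2743 : ℝ) / 273420675) * y ^ 7 + ((-111962 : ℝ) / 273420675) * y ^ 8 + ((8213923 : ℝ) / 1093682700) * y ^ 9 + ((-3554069 : ℝ) / 49712850) * y ^ 10 + ((3311491 : ℝ) / 9038700) * y ^ 11 + ((-4371 : ℝ) / 4565) * y ^ 12 + (1 : ℝ) * y ^ 13) ^ 2 := by ring
  rw [h]
  positivity

lemma certP_even (y : ℝ) : certP.eval (-y) = certP.eval y := by
  rw [certP_eval, certP_eval]; ring

lemma certP_abs (y : ℝ) : |y| ≤ certP.eval y := by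
  rcases abs_cases y with ⟨h, _⟩ | ⟨h, _⟩
  · rw [h]; linarith [certP_sos y]
  · rw [h]; have h2 := certP_sos (-y); rw [certP_even] at h2; linarith

lemma certP_conds : certConds certP := by
  refine ⟨?_, ?_, ?_⟩
  · rw [natDegree_le_iff_coeff_eq_zero]
    intro m hm
    rw [certP_coeff, certC_high (by omega), Rat.cast_zero]
  · intro i hi
    rw [certP_coeff, certC_odd (Nat.odd_iff.mp hi), Rat.cast_zero]
  · intro j
    constructor
    · rw [certP_eval]; fin_cases j <;> norm_num [certNodes]
    · rw [certP_deriv_eval]; fin_cases j <;> norm_num [certNodes]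

lemma even_eval {D : Polynomial ℝ} (h : ∀ i, Odd i → D.coeff i = 0) (x : ℝ) :
    D.eval (-x) = D.eval x := by
  rw [eval_eq_sum_range, eval_eq_sum_range]
  refine Finset.sum_congr rfl fun i _ => ?_
  rcases Nat.even_or_odd i with he | ho
  · rw [he.neg_pow]
  · rw [h i ho]; ring

lemma odd_eval {D : Polynomial ℝ} (h : ∀ i, Even i → D.coeff i = 0) (x : ℝ) :
    D.eval (-x) = - D.eval x := by
  rw [eval_eq_sum_range, eval_eq_sum_range, ← Finset.sum_neg_distrib]
  refine Finset.sum_congr rfl fun i _ => ?_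
  rcases Nat.even_or_odd i with he | ho
  · rw [h i he]; ring
  · rw [ho.neg_pow]; ring

noncomputable def certV : Fin 14 → ℝ := fun i =>
  if h : (i : ℕ) < 7 then certNodes ⟨i, h⟩ else -(certNodes ⟨(i : ℕ) - 7, by omega⟩)

def certW : Fin 14 → ℤ :=
  ![330, 1245, 2490, 3652, 4980, 6225, 7304,
    -330, -1245, -2490, -3652, -4980, -6225, -7304]

lemma certV_scaled (i : Fin 14) : (27390 : ℝ) * certV i = ((certW i : ℤ) : ℝ) := by
  fin_cases i <;> norm_num [certV, certNodes, certW]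

lemma certW_inj : Function.Injective certW := by decide

lemma certV_inj : Function.Injective certV := by
  intro i j hij
  apply certW_inj
  have h1 := certV_scaled i
  rw [hij, certV_scaled j] at h1
  exact_mod_cast h1.symm

lemma certConds_unique {Q P : Polynomial ℝ} (hQ : certConds Q) (hP : certConds P) : Q = P := by
  by_contra hne
  have hD0 : Q - P ≠ 0 := sub_ne_zero.mpr hne
  obtain ⟨hdQ, hoQ, hvQ⟩ := hQ
  obtain ⟨hdP, hoP, hvP⟩ := hP
  have hdeg : (Q - P).natDegree ≤ 26 :=
    le_trans (natDegree_sub_le Q P) (max_le hdQ hdP)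
  have hodd : ∀ i, Odd i → (Q - P).coeff i = 0 := by
    intro i hi; rw [coeff_sub, hoQ i hi, hoP i hi, sub_zero]
  have hoddD : ∀ i, Even i → (Q - P).derivative.coeff i = 0 := by
    intro i hi
    rw [coeff_derivative, hodd (i + 1) (Even.add_one hi), zero_mul]
  have hroot : ∀ j : Fin 7, (Q - P).IsRoot (certNodes j) := by
    intro j
    rw [IsRoot, eval_sub, (hvQ j).1, (hvP j).1, sub_self]
  have hroot' : ∀ j : Fin 7, (Q - P).derivative.IsRoot (certNodes j) := by
    intro j
    rw [IsRoot, derivative_sub, eval_sub, (hvQ j).2, (hvP j).2, sub_self]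
  have hvroots : ∀ i, (Q - P).IsRoot (certV i) ∧ (Q - P).derivative.IsRoot (certV i) := by
    intro i
    unfold certV
    by_cases h : (i : ℕ) < 7
    · rw [dif_pos h]; exact ⟨hroot _, hroot' _⟩
    · rw [dif_neg h]
      constructor
      · rw [IsRoot, even_eval hodd]; exact hroot _
      · rw [IsRoot, odd_eval hoddD, hroot' _, neg_zero]
  have hdvd : ∀ i, (X - C (certV i)) ^ 2 ∣ (Q - P) := by
    intro i
    have h2 : 1 < (Q - P).rootMultiplicity (certV i) :=
      (one_lt_rootMultiplicity_iff_isRoot hD0).mpr (hvroots i)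
    exact (pow_dvd_pow _ h2).trans ((Q - P).pow_rootMultiplicity_dvd (certV i))
  have hprod : (∏ i : Fin 14, (X - C (certV i)) ^ 2) ∣ (Q - P) :=
    Fintype.prod_dvd_of_coprime
      (fun i j hij => ((pairwise_coprime_X_sub_C certV_inj) hij).pow) hdvd
  have hdeg' := natDegree_le_of_dvd hprod hD0
  rw [natDegree_prod _ _ (fun i _ => pow_ne_zero _ (X_sub_C_ne_zero _))] at hdeg'
  simp only [natDegree_pow, natDegree_X_sub_C, mul_one, Finset.sum_const,
    Finset.card_univ, Fintype.card_fin, smul_eq_mul] at hdeg'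
  omega

theorem cert_polynomial_exists :
    ∃ P : Polynomial ℝ,
      (certConds P ∧ (∀ i, ∃ q : ℚ, P.coeff i = (q : ℝ)) ∧
        ∀ y : ℝ, |y| ≤ P.eval y) ∧
      ∀ Q : Polynomial ℝ, certConds Q → Q = P := by
  refine ⟨certP, ⟨certP_conds, fun i => ⟨certC i, certP_coeff i⟩, certP_abs⟩,
    fun Q hQ => certConds_unique hQ certP_conds⟩
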